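/- Let (M,g) be an n-dimensional Einstein pseudo-Riemannian manifold whose metric is conformally flat, with P_{ab} = (J/n)g_{ab} and J ≠ 0 constant. Let k be a conformal Killing 1-form with ∇_{(a}k_{b)} = -ρ g_{ab}, ρ = -(1/n)∇_a k^a. Then the Hessian of ρ satisfies ∇_a∇_b ρ = -(2J/n)ρ g_{ab}, and consequently the vector field k̄_b = k_b + (1/(2J))∇_b ∇_a k^a is a Killing vector field for g. -/

import Mathlib

noncomputable section
open scoped BigOperators

/-- Partial derivative `∂ᵢ f` of a real-valued function on the chart `Fin n → ℝ`. -/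
def pd {n : ℕ} (i : Fin n) (f : (Fin n → ℝ) → ℝ) (x : Fin n → ℝ) : ℝ :=
  fderiv ℝ f x (fun j => if j = i then (1 : ℝ) else 0)

/-- A pseudo-Riemannian metric on the global chart `Fin n → ℝ`. -/
structure PseudoMetricChart (n : ℕ) where
  g : (Fin n → ℝ) → Fin n → Fin n → ℝ
  ginv : (Fin n → ℝ) → Fin n → Fin n → ℝ
  symm : ∀ x a b, g x a b = g x b a
  invl : ∀ x a b, (∑ c, ginv x a c * g x c b) = if a = b then (1 : ℝ) else 0
  smooth_g : ∀ a b, ContDiff ℝ (⊤ : ℕ∞) fun x => g x a b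
  smooth_ginv : ∀ a b, ContDiff ℝ (⊤ : ℕ∞) fun x => ginv x a b

namespace PseudoMetricChart

variable {n : ℕ} (M : PseudoMetricChart n)

/-- Christoffel symbols `Γ^a_{bc}` of the Levi-Civita connection. -/
def Γ (x : Fin n → ℝ) (a b c : Fin n) : ℝ :=
  (1 / 2) * ∑ d, M.ginv x a d *
    (pd b (fun y => M.g y d c) x + pd c (fun y => M.g y d b) x - pd d (fun y => M.g y b c) x)

/-- Covariant derivative `∇_a k_b` of a 1-form. -/
def covD1 (k : (Fin n → ℝ) → Fin n → ℝ) (x : Fin n → ℝ) (a b : Fin n) : ℝ :=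
  pd a (fun y => k y b) x - ∑ c, M.Γ x c a b * k x c

/-- Covariant derivative `∇_a v^b` of a vector field. -/
def covDvec (v : (Fin n → ℝ) → Fin n → ℝ) (x : Fin n → ℝ) (a b : Fin n) : ℝ :=
  pd a (fun y => v y b) x + ∑ c, M.Γ x b a c * v x c

/-- Covariant derivative `∇_a k_{bc}` of a covariant 2-tensor. -/
def covD2 (k : (Fin n → ℝ) → Fin n → Fin n → ℝ) (x : Fin n → ℝ) (a b c : Fin n) : ℝ :=
  pd a (fun y => k y b c) x - (∑ d, M.Γ x d a b * k x d c) - ∑ d, M.Γ x d a c * k x b d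

/-- Divergence `∇_a v^a` of a vector field. -/
def divVec (v : (Fin n → ℝ) → Fin n → ℝ) (x : Fin n → ℝ) : ℝ :=
  ∑ a, M.covDvec v x a a

/-- Laplacian `Δf = g^{ac} ∇_a ∇_c f` of a function. -/
def lap0 (f : (Fin n → ℝ) → ℝ) (x : Fin n → ℝ) : ℝ :=
  ∑ a, ∑ c, M.ginv x a c * M.covD1 (fun y b => pd b f y) x a c

/-- Laplacian `Δk_b = g^{ac} ∇_a ∇_c k_b` of a 1-form. -/
def lap1 (k : (Fin n → ℝ) → Fin n → ℝ) (x : Fin n → ℝ) (b : Fin n) : ℝ :=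
  ∑ a, ∑ c, M.ginv x a c * M.covD2 (fun y p q => M.covD1 k y p q) x a c b

/-- Riemann curvature `R_{ab}{}^c{}_d`, with the convention
`R_{ab}{}^c{}_d X^d = ∇_a ∇_b X^c - ∇_b ∇_a X^c`. -/
def Riem (x : Fin n → ℝ) (a b c d : Fin n) : ℝ :=
  pd a (fun y => M.Γ y c b d) x - pd b (fun y => M.Γ y c a d) x
    + (∑ e, M.Γ x c a e * M.Γ x e b d) - ∑ e, M.Γ x c b e * M.Γ x e a d

/-- Ricci curvature `R_{bd} = R_{ab}{}^a{}_d`. -/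
def Ricci (x : Fin n → ℝ) (b d : Fin n) : ℝ := ∑ a, M.Riem x a b a d

/-- Scalar curvature. -/
def scal (x : Fin n → ℝ) : ℝ := ∑ b, ∑ d, M.ginv x b d * M.Ricci x b d

/-- Trace of the Schouten tensor, `J = Scal/(2(n-1))`. -/
def Jsc (x : Fin n → ℝ) : ℝ := (1 / (2 * ((n : ℝ) - 1))) * M.scal x

/-- Schouten tensor, `P_{ab} = (Ric_{ab} - J g_{ab})/(n-2)`. -/
def Schouten (x : Fin n → ℝ) (a b : Fin n) : ℝ :=
  (1 / ((n : ℝ) - 2)) * (M.Ricci x a b - M.Jsc x * M.g x a b)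

end PseudoMetricChart


namespace CalcAux

variable {n : ℕ}

abbrev Sm (f : (Fin n → ℝ) → ℝ) : Prop := ContDiff ℝ (⊤:ℕ∞) f

lemma le1 : (1 : WithTop ℕ∞) ≤ ((⊤:ℕ∞) : WithTop ℕ∞) := by
  rw [show ((1:WithTop ℕ∞)) = ((1:ℕ∞) : WithTop ℕ∞) by rfl]; exact_mod_cast le_top
lemma le2 : (2 : WithTop ℕ∞) ≤ ((⊤:ℕ∞) : WithTop ℕ∞) := by
  rw [show ((2:WithTop ℕ∞)) = ((2:ℕ∞) : WithTop ℕ∞) by rfl]; exact_mod_cast le_top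
lemma leS : ((⊤:ℕ∞) : WithTop ℕ∞) + 1 ≤ ((⊤:ℕ∞) : WithTop ℕ∞) := by
  rw [show (((⊤:ℕ∞) : WithTop ℕ∞) + 1) = (((⊤:ℕ∞)+1 : ℕ∞) : WithTop ℕ∞) by push_cast; rfl]
  exact_mod_cast le_top

lemma Sm.diffAt {f : (Fin n → ℝ) → ℝ} (hf : Sm f) (x : Fin n → ℝ) : DifferentiableAt ℝ f x :=
  (hf.differentiable (zero_lt_one.trans_le le1).ne') x

lemma pd_congr {f h : (Fin n → ℝ) → ℝ} (i : Fin n) (x : Fin n → ℝ) (e : ∀ y, f y = h y) :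
    pd i f x = pd i h x := by rw [funext e]

lemma pd_add {f h : (Fin n → ℝ) → ℝ} (hf : Sm f) (hh : Sm h) (i : Fin n) (x : Fin n → ℝ) :
    pd i (fun y => f y + h y) x = pd i f x + pd i h x := by
  unfold pd; rw [fderiv_fun_add (hf.diffAt x) (hh.diffAt x)]; rfl

lemma pd_neg {f : (Fin n → ℝ) → ℝ} (i : Fin n) (x : Fin n → ℝ) :
    pd i (fun y => -f y) x = -pd i f x := by
  unfold pd; rw [fderiv_fun_neg]; rfl

lemma pd_sub {f h : (Fin n → ℝ) → ℝ} (hf : Sm f) (hh : Sm h) (i : Fin n) (x : Fin n → ℝ) :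
    pd i (fun y => f y - h y) x = pd i f x - pd i h x := by
  unfold pd; rw [fderiv_fun_sub (hf.diffAt x) (hh.diffAt x)]; rfl

lemma pd_mul {f h : (Fin n → ℝ) → ℝ} (hf : Sm f) (hh : Sm h) (i : Fin n) (x : Fin n → ℝ) :
    pd i (fun y => f y * h y) x = pd i f x * h x + f x * pd i h x := by
  unfold pd; rw [fderiv_fun_mul (hf.diffAt x) (hh.diffAt x)]; simp; ring

lemma pd_const (c : ℝ) (i : Fin n) (x : Fin n → ℝ) : pd i (fun _ => c) x = 0 := by
  unfold pd; rw [fderiv_fun_const]; simp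

lemma pd_const_mul {f : (Fin n → ℝ) → ℝ} (hf : Sm f) (c : ℝ) (i : Fin n) (x : Fin n → ℝ) :
    pd i (fun y => c * f y) x = c * pd i f x := by
  unfold pd; rw [fderiv_const_mul (hf.diffAt x)]; rfl

lemma pd_sum {m : ℕ} {F : Fin m → (Fin n → ℝ) → ℝ} (hF : ∀ j, Sm (F j)) (i : Fin n)
    (x : Fin n → ℝ) : pd i (fun y => ∑ j, F j y) x = ∑ j, pd i (F j) x := by
  unfold pd
  rw [fderiv_fun_sum (fun j _ => (hF j).diffAt x)]
  simp

lemma Sm_pd {f : (Fin n → ℝ) → ℝ} (hf : Sm f) (i : Fin n) : Sm (pd i f) := by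
  unfold _root_.pd
  exact (hf.fderiv_right leS).clm_apply contDiff_const

lemma Sm_add {f h : (Fin n → ℝ) → ℝ} (hf : Sm f) (hh : Sm h) : Sm (fun y => f y + h y) := hf.add hh
lemma Sm_mul {f h : (Fin n → ℝ) → ℝ} (hf : Sm f) (hh : Sm h) : Sm (fun y => f y * h y) := hf.mul hh
lemma Sm_sub {f h : (Fin n → ℝ) → ℝ} (hf : Sm f) (hh : Sm h) : Sm (fun y => f y - h y) := hf.sub hh
lemma Sm_neg {f : (Fin n → ℝ) → ℝ} (hf : Sm f) : Sm (fun y => -f y) := hf.neg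
lemma Sm_const (c : ℝ) : Sm (fun _ : Fin n → ℝ => c) := contDiff_const
lemma Sm_cmul {f : (Fin n → ℝ) → ℝ} (hf : Sm f) (c : ℝ) : Sm (fun y => c * f y) := contDiff_const.mul hf
lemma Sm_sum {ι : Type*} {s : Finset ι} {F : ι → (Fin n → ℝ) → ℝ} (hF : ∀ j, Sm (F j)) :
    Sm (fun y => ∑ j ∈ s, F j y) := ContDiff.sum (fun j _ => hF j)

lemma pd_comm {f : (Fin n → ℝ) → ℝ} (hf : Sm f) (i j : Fin n) (x : Fin n → ℝ) :
    pd i (pd j f) x = pd j (pd i f) x := by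
  have hsym := (hf.contDiffAt (x := x)).isSymmSndFDerivAt (by rw [minSmoothness_of_isRCLikeNormedField]; exact le2)
  have hfd : ContDiff ℝ (⊤:ℕ∞) (fderiv ℝ f) := hf.fderiv_right leS
  have key' : ∀ (a b : Fin n), pd a (pd b f) x
      = fderiv ℝ (fderiv ℝ f) x (fun j' => if j' = a then (1:ℝ) else 0)
          (fun j' => if j' = b then (1:ℝ) else 0) := by
    intro a b
    have h1 : pd a (pd b f) x
        = fderiv ℝ (fun y => fderiv ℝ f y (fun j' => if j' = b then (1:ℝ) else 0)) x
            (fun j' => if j' = a then (1:ℝ) else 0) := rfl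
    rw [h1, fderiv_clm_apply ((hfd.differentiable (zero_lt_one.trans_le le1).ne') x) (differentiableAt_const _)]
    simp
  rw [key', key', hsym]

end CalcAux

namespace PseudoMetricChart
open CalcAux

variable {n : ℕ} (M : PseudoMetricChart n)

lemma sum_factor {m : ℕ} (c : ℝ) (f h : Fin m → ℝ) :
    ∑ e, f e * (c * h e) = c * ∑ e, f e * h e := by
  rw [Finset.mul_sum]; exact Finset.sum_congr rfl fun e _ => by ring

lemma sum_factor' {m : ℕ} (c : ℝ) (f h : Fin m → ℝ) :
    ∑ e, f e * (h e * c) = (∑ e, f e * h e) * c := by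
  rw [Finset.sum_mul]; exact Finset.sum_congr rfl fun e _ => by ring

lemma matmul_one (x : Fin n → ℝ) :
    (Matrix.of (fun a b => M.g x a b)) * (Matrix.of (fun a b => M.ginv x a b)) = 1 := by
  have h : (Matrix.of (fun a b => M.ginv x a b)) * (Matrix.of (fun a b => M.g x a b)) = 1 := by
    ext a b
    simp only [Matrix.mul_apply, Matrix.of_apply, Matrix.one_apply]
    exact M.invl x a b
  exact mul_eq_one_comm.mp h

lemma invr : ∀ (x : Fin n → ℝ) (a b : Fin n),
    (∑ c, M.g x a c * M.ginv x c b) = if a = b then (1 : ℝ) else 0 := by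
  intro x a b
  have := congrFun (congrFun (M.matmul_one x) a) b
  simpa [Matrix.mul_apply, Matrix.one_apply] using this

open Matrix in
lemma ginv_symm (x : Fin n → ℝ) (a b : Fin n) : M.ginv x a b = M.ginv x b a := by
  set A := Matrix.of (fun a b => M.ginv x a b) with hA
  set B := Matrix.of (fun a b => M.g x a b) with hB
  have h1 : A * B = 1 := by
    ext a b
    simp only [Matrix.mul_apply, Matrix.of_apply, Matrix.one_apply, hA, hB]
    exact M.invl x a b
  have h2 : B * A = 1 := mul_eq_one_comm.mp h1
  have hBs : Bᵀ = B := by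
    ext a b; simp only [Matrix.transpose_apply, Matrix.of_apply, hB]; exact M.symm x b a
  have h3 : Aᵀ * B = 1 := by
    have := congrArg Matrix.transpose h2
    rw [Matrix.transpose_mul, hBs, Matrix.transpose_one] at this
    exact this
  have h4 : Aᵀ = A := by
    calc Aᵀ = Aᵀ * (B * A) := by rw [h2, Matrix.mul_one]
    _ = (Aᵀ * B) * A := by rw [Matrix.mul_assoc]
    _ = A := by rw [h3, Matrix.one_mul]
  have := congrFun (congrFun h4 b) a
  simpa [hA] using this

lemma smg (a b : Fin n) : Sm (fun x => M.g x a b) := M.smooth_g a b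
lemma smginv (a b : Fin n) : Sm (fun x => M.ginv x a b) := M.smooth_ginv a b

lemma smΓ (a b c : Fin n) : Sm (fun x => M.Γ x a b c) := by
  unfold Γ
  apply Sm_cmul
  exact Sm_sum fun d => Sm_mul (M.smooth_ginv a d)
    (Sm_sub (Sm_add (Sm_pd (M.smooth_g d c) b) (Sm_pd (M.smooth_g d b) c)) (Sm_pd (M.smooth_g b c) d))

lemma Γ_symm (x : Fin n → ℝ) (a b c : Fin n) : M.Γ x a b c = M.Γ x a c b := by
  unfold Γ
  congr 1
  apply Finset.sum_congr rfl
  intro d _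
  rw [pd_congr d x (fun y => M.symm y b c)]
  ring

lemma smCovD1 {k : (Fin n → ℝ) → Fin n → ℝ} (hk : ∀ b, Sm (fun x => k x b)) (a b : Fin n) :
    Sm (fun x => M.covD1 k x a b) := by
  unfold covD1
  exact Sm_sub (Sm_pd (hk b) a) (Sm_sum fun c => Sm_mul (M.smΓ c a b) (hk c))

lemma smCovD2 {T : (Fin n → ℝ) → Fin n → Fin n → ℝ} (hT : ∀ a b, Sm (fun x => T x a b))
    (a b c : Fin n) : Sm (fun x => M.covD2 T x a b c) := by
  unfold covD2
  exact Sm_sub (Sm_sub (Sm_pd (hT b c) a) (Sm_sum fun d => Sm_mul (M.smΓ d a b) (hT d c)))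
    (Sm_sum fun d => Sm_mul (M.smΓ d a c) (hT b d))

lemma lowerΓ (x : Fin n → ℝ) (a b c : Fin n) :
    (∑ d, M.Γ x d a b * M.g x d c)
      = (1/2) * (pd a (fun y => M.g y c b) x + pd b (fun y => M.g y c a) x
          - pd c (fun y => M.g y a b) x) := by
  have step1 : ∀ d, M.Γ x d a b * M.g x d c
      = ∑ e, (M.g x c d * M.ginv x d e) *
          ((1/2) * (pd a (fun y => M.g y e b) x + pd b (fun y => M.g y e a) x
            - pd e (fun y => M.g y a b) x)) := by
    intro d
    unfold Γ
    rw [mul_comm, Finset.mul_sum, Finset.mul_sum]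
    apply Finset.sum_congr rfl
    intro e _
    rw [M.symm x c d]
    ring
  calc (∑ d, M.Γ x d a b * M.g x d c)
      = ∑ d, ∑ e, (M.g x c d * M.ginv x d e) *
          ((1/2) * (pd a (fun y => M.g y e b) x + pd b (fun y => M.g y e a) x
            - pd e (fun y => M.g y a b) x)) := Finset.sum_congr rfl fun d _ => step1 d
    _ = ∑ e, (∑ d, M.g x c d * M.ginv x d e) *
          ((1/2) * (pd a (fun y => M.g y e b) x + pd b (fun y => M.g y e a) x
            - pd e (fun y => M.g y a b) x)) := by
          rw [Finset.sum_comm]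
          exact Finset.sum_congr rfl fun e _ => (Finset.sum_mul _ _ _).symm
    _ = ∑ e, (if c = e then (1:ℝ) else 0) *
          ((1/2) * (pd a (fun y => M.g y e b) x + pd b (fun y => M.g y e a) x
            - pd e (fun y => M.g y a b) x)) := by
          exact Finset.sum_congr rfl fun e _ => by rw [M.invr x c e]
    _ = (1/2) * (pd a (fun y => M.g y c b) x + pd b (fun y => M.g y c a) x
            - pd c (fun y => M.g y a b) x) := by
          simp only [ite_mul, one_mul, zero_mul, Finset.sum_ite_eq, Finset.mem_univ, if_true]

lemma compat (x : Fin n → ℝ) (a b c : Fin n) : M.covD2 (fun y => M.g y) x a b c = 0 := by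
  unfold covD2
  have h1 : (∑ d, M.Γ x d a b * M.g x d c)
      = (1/2) * (pd a (fun y => M.g y c b) x + pd b (fun y => M.g y c a) x
          - pd c (fun y => M.g y a b) x) := M.lowerΓ x a b c
  have h2 : (∑ d, M.Γ x d a c * M.g x b d)
      = (1/2) * (pd a (fun y => M.g y b c) x + pd c (fun y => M.g y b a) x
          - pd b (fun y => M.g y a c) x) := by
    rw [show (∑ d, M.Γ x d a c * M.g x b d) = ∑ d, M.Γ x d a c * M.g x d b from
      Finset.sum_congr rfl fun d _ => by rw [M.symm x b d]]
    exact M.lowerΓ x a c b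
  rw [h1, h2,
    pd_congr a x (fun y => M.symm y c b),
    pd_congr b x (fun y => M.symm y c a),
    pd_congr c x (fun y => M.symm y b a)]
  ring

/-- Covariant derivative of a 3-tensor. -/
def covD3 (T : (Fin n → ℝ) → Fin n → Fin n → Fin n → ℝ) (x : Fin n → ℝ) (a b c d : Fin n) : ℝ :=
  pd a (fun y => T y b c d) x - (∑ e, M.Γ x e a b * T x e c d)
    - (∑ e, M.Γ x e a c * T x b e d) - ∑ e, M.Γ x e a d * T x b c e

lemma ricci1 {k : (Fin n → ℝ) → Fin n → ℝ} (hk : ∀ b, Sm (fun x => k x b))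
    (x : Fin n → ℝ) (a b c : Fin n) :
    M.covD2 (fun y p q => M.covD1 k y p q) x a b c
      - M.covD2 (fun y p q => M.covD1 k y p q) x b a c
      = -∑ d, M.Riem x a b d c * k x d := by
  have hpd : ∀ p q : Fin n, pd p (fun y => M.covD1 k y q c) x
      = pd p (pd q (fun y => k y c)) x
        - ∑ d, (pd p (fun y => M.Γ y d q c) x * k x d
            + M.Γ x d q c * pd p (fun y => k y d) x) := by
    intro p q
    rw [pd_congr p x (fun y => show M.covD1 k y q c
      = pd q (fun z => k z c) y - ∑ d, M.Γ y d q c * k y d from rfl)]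
    rw [pd_sub (Sm_pd (hk c) q) (Sm_sum fun d => Sm_mul (M.smΓ d q c) (hk d)),
      pd_sum (fun d => Sm_mul (M.smΓ d q c) (hk d))]
    congr 1
    exact Finset.sum_congr rfl fun d _ => pd_mul (M.smΓ d q c) (hk d) p x
  unfold covD2
  rw [hpd a b, hpd b a]
  simp only []
  have h1 : pd a (pd b fun y => k y c) x = pd b (pd a fun y => k y c) x :=
    pd_comm (hk c) a b x
  have h2 : (∑ d, M.Γ x d a b * M.covD1 k x d c)
      = ∑ d, M.Γ x d b a * M.covD1 k x d c :=
    Finset.sum_congr rfl fun d _ => by rw [M.Γ_symm x d a b]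
  have hsplit : ∀ p q : Fin n,
      (∑ d, (pd p (fun y => M.Γ y d q c) x * k x d + M.Γ x d q c * pd p (fun y => k y d) x))
        = (∑ d, pd p (fun y => M.Γ y d q c) x * k x d)
          + ∑ d, M.Γ x d q c * pd p (fun y => k y d) x := fun p q =>
    Finset.sum_add_distrib
  have hcov : ∀ p q : Fin n, (∑ d, M.Γ x d p c * M.covD1 k x q d)
      = (∑ d, M.Γ x d p c * pd q (fun y => k y d) x)
        - ∑ d, M.Γ x d p c * ∑ e, M.Γ x e q d * k x e := by
    intro p q
    rw [← Finset.sum_sub_distrib]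
    exact Finset.sum_congr rfl fun d _ => by unfold covD1; ring
  have hR : (∑ d, M.Riem x a b d c * k x d)
      = ((∑ d, pd a (fun y => M.Γ y d b c) x * k x d)
          - ∑ d, pd b (fun y => M.Γ y d a c) x * k x d)
        + ((∑ d, (∑ e, M.Γ x d a e * M.Γ x e b c) * k x d)
          - ∑ d, (∑ e, M.Γ x d b e * M.Γ x e a c) * k x d) := by
    rw [← Finset.sum_sub_distrib, ← Finset.sum_sub_distrib, ← Finset.sum_add_distrib]
    exact Finset.sum_congr rfl fun d _ => by unfold Riem; ring
  have hs1 : (∑ d, M.Γ x d a c * ∑ e, M.Γ x e b d * k x e)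
      = ∑ d, (∑ e, M.Γ x d b e * M.Γ x e a c) * k x d := by
    calc (∑ d, M.Γ x d a c * ∑ e, M.Γ x e b d * k x e)
        = ∑ d, ∑ e, M.Γ x d a c * (M.Γ x e b d * k x e) :=
          Finset.sum_congr rfl fun d _ => Finset.mul_sum _ _ _
      _ = ∑ e, ∑ d, M.Γ x d a c * (M.Γ x e b d * k x e) := Finset.sum_comm
      _ = ∑ d, (∑ e, M.Γ x d b e * M.Γ x e a c) * k x d := by
          refine Finset.sum_congr rfl fun d _ => ?_
          rw [Finset.sum_mul]
          exact Finset.sum_congr rfl fun e _ => by ring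
  have hs2 : (∑ d, M.Γ x d b c * ∑ e, M.Γ x e a d * k x e)
      = ∑ d, (∑ e, M.Γ x d a e * M.Γ x e b c) * k x d := by
    calc (∑ d, M.Γ x d b c * ∑ e, M.Γ x e a d * k x e)
        = ∑ d, ∑ e, M.Γ x d b c * (M.Γ x e a d * k x e) :=
          Finset.sum_congr rfl fun d _ => Finset.mul_sum _ _ _
      _ = ∑ e, ∑ d, M.Γ x d b c * (M.Γ x e a d * k x e) := Finset.sum_comm
      _ = ∑ d, (∑ e, M.Γ x d a e * M.Γ x e b c) * k x d := by
          refine Finset.sum_congr rfl fun d _ => ?_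
          rw [Finset.sum_mul]
          exact Finset.sum_congr rfl fun e _ => by ring
  rw [hsplit a b, hsplit b a, hcov a b, hcov b a, hR]
  linear_combination h1 - h2 + hs1 - hs2

lemma ricci2 {T : (Fin n → ℝ) → Fin n → Fin n → ℝ} (hT : ∀ a b, Sm (fun x => T x a b))
    (x : Fin n → ℝ) (a b c d : Fin n) :
    M.covD3 (fun y p q r => M.covD2 T y p q r) x a b c d
      - M.covD3 (fun y p q r => M.covD2 T y p q r) x b a c d
      = -(∑ e, M.Riem x a b e c * T x e d) - ∑ e, M.Riem x a b e d * T x c e := by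
  have sum_swap : ∀ A : Fin n → Fin n → ℝ, (∑ e, ∑ f, A e f) = ∑ e, ∑ f, A f e :=
    fun A => Finset.sum_comm
  have hpd : ∀ p q : Fin n, pd p (fun y => M.covD2 T y q c d) x
      = pd p (pd q (fun y => T y c d)) x
        - (∑ e, (pd p (fun y => M.Γ y e q c) x * T x e d
            + M.Γ x e q c * pd p (fun y => T y e d) x))
        - ∑ e, (pd p (fun y => M.Γ y e q d) x * T x c e
            + M.Γ x e q d * pd p (fun y => T y c e) x) := by
    intro p q
    rw [pd_congr p x (fun y => show M.covD2 T y q c d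
      = pd q (fun z => T z c d) y - (∑ e, M.Γ y e q c * T y e d)
        - ∑ e, M.Γ y e q d * T y c e from rfl)]
    rw [pd_sub (Sm_sub (Sm_pd (hT c d) q) (Sm_sum fun e => Sm_mul (M.smΓ e q c) (hT e d)))
        (Sm_sum fun e => Sm_mul (M.smΓ e q d) (hT c e)),
      pd_sub (Sm_pd (hT c d) q) (Sm_sum fun e => Sm_mul (M.smΓ e q c) (hT e d)),
      pd_sum (fun e => Sm_mul (M.smΓ e q c) (hT e d)),
      pd_sum (fun e => Sm_mul (M.smΓ e q d) (hT c e)),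
      Finset.sum_congr rfl (fun e _ => pd_mul (M.smΓ e q c) (hT e d) p x),
      Finset.sum_congr rfl (fun e _ => pd_mul (M.smΓ e q d) (hT c e) p x)]
  unfold covD3
  rw [hpd a b, hpd b a]
  simp only []
  have h1 : pd a (pd b fun y => T y c d) x = pd b (pd a fun y => T y c d) x :=
    pd_comm (hT c d) a b x
  have h2 : (∑ e, M.Γ x e a b * M.covD2 T x e c d)
      = ∑ e, M.Γ x e b a * M.covD2 T x e c d :=
    Finset.sum_congr rfl fun e _ => by rw [M.Γ_symm x e a b]
  have hsplit : ∀ (F G : Fin n → ℝ), (∑ e, (F e + G e)) = (∑ e, F e) + ∑ e, G e :=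
    fun F G => Finset.sum_add_distrib
  have hcovc : ∀ p q : Fin n, (∑ e, M.Γ x e p c * M.covD2 T x q e d)
      = (∑ e, M.Γ x e p c * pd q (fun y => T y e d) x)
        - (∑ e, ∑ f, M.Γ x e p c * (M.Γ x f q e * T x f d))
        - ∑ e, ∑ f, M.Γ x e p c * (M.Γ x f q d * T x e f) := by
    intro p q
    rw [← Finset.sum_sub_distrib, ← Finset.sum_sub_distrib]
    refine Finset.sum_congr rfl fun e _ => ?_
    unfold covD2
    rw [mul_sub, mul_sub, Finset.mul_sum, Finset.mul_sum]
  have hcovd : ∀ p q : Fin n, (∑ e, M.Γ x e p d * M.covD2 T x q c e)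
      = (∑ e, M.Γ x e p d * pd q (fun y => T y c e) x)
        - (∑ e, ∑ f, M.Γ x e p d * (M.Γ x f q c * T x f e))
        - ∑ e, ∑ f, M.Γ x e p d * (M.Γ x f q e * T x c f) := by
    intro p q
    rw [← Finset.sum_sub_distrib, ← Finset.sum_sub_distrib]
    refine Finset.sum_congr rfl fun e _ => ?_
    unfold covD2
    rw [mul_sub, mul_sub, Finset.mul_sum, Finset.mul_sum]
  have hRc : (∑ e, M.Riem x a b e c * T x e d)
      = ((∑ e, pd a (fun y => M.Γ y e b c) x * T x e d)
          - ∑ e, pd b (fun y => M.Γ y e a c) x * T x e d)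
        + ((∑ e, ∑ f, M.Γ x e a f * M.Γ x f b c * T x e d)
          - ∑ e, ∑ f, M.Γ x e b f * M.Γ x f a c * T x e d) := by
    rw [← Finset.sum_sub_distrib, ← Finset.sum_sub_distrib, ← Finset.sum_add_distrib]
    refine Finset.sum_congr rfl fun e _ => ?_
    unfold Riem
    simp only [sub_mul, add_mul, Finset.sum_mul]
    ring
  have hRd : (∑ e, M.Riem x a b e d * T x c e)
      = ((∑ e, pd a (fun y => M.Γ y e b d) x * T x c e)
          - ∑ e, pd b (fun y => M.Γ y e a d) x * T x c e)
        + ((∑ e, ∑ f, M.Γ x e a f * M.Γ x f b d * T x c e)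
          - ∑ e, ∑ f, M.Γ x e b f * M.Γ x f a d * T x c e) := by
    rw [← Finset.sum_sub_distrib, ← Finset.sum_sub_distrib, ← Finset.sum_add_distrib]
    refine Finset.sum_congr rfl fun e _ => ?_
    unfold Riem
    simp only [sub_mul, add_mul, Finset.sum_mul]
    ring
  have hs1 : (∑ e, ∑ f, M.Γ x e a c * (M.Γ x f b e * T x f d))
      = ∑ e, ∑ f, M.Γ x e b f * M.Γ x f a c * T x e d := by
    rw [sum_swap fun e f => M.Γ x e a c * (M.Γ x f b e * T x f d)]
    exact Finset.sum_congr rfl fun e _ => Finset.sum_congr rfl fun f _ => by ring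
  have hs2 : (∑ e, ∑ f, M.Γ x e b c * (M.Γ x f a e * T x f d))
      = ∑ e, ∑ f, M.Γ x e a f * M.Γ x f b c * T x e d := by
    rw [sum_swap fun e f => M.Γ x e b c * (M.Γ x f a e * T x f d)]
    exact Finset.sum_congr rfl fun e _ => Finset.sum_congr rfl fun f _ => by ring
  have hs3 : (∑ e, ∑ f, M.Γ x e a d * (M.Γ x f b e * T x c f))
      = ∑ e, ∑ f, M.Γ x e b f * M.Γ x f a d * T x c e := by
    rw [sum_swap fun e f => M.Γ x e a d * (M.Γ x f b e * T x c f)]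
    exact Finset.sum_congr rfl fun e _ => Finset.sum_congr rfl fun f _ => by ring
  have hs4 : (∑ e, ∑ f, M.Γ x e b d * (M.Γ x f a e * T x c f))
      = ∑ e, ∑ f, M.Γ x e a f * M.Γ x f b d * T x c e := by
    rw [sum_swap fun e f => M.Γ x e b d * (M.Γ x f a e * T x c f)]
    exact Finset.sum_congr rfl fun e _ => Finset.sum_congr rfl fun f _ => by ring
  have hx1 : (∑ e, ∑ f, M.Γ x e a d * (M.Γ x f b c * T x f e))
      = ∑ e, ∑ f, M.Γ x e b c * (M.Γ x f a d * T x e f) := by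
    rw [sum_swap fun e f => M.Γ x e a d * (M.Γ x f b c * T x f e)]
    exact Finset.sum_congr rfl fun e _ => Finset.sum_congr rfl fun f _ => by ring
  have hx2 : (∑ e, ∑ f, M.Γ x e b d * (M.Γ x f a c * T x f e))
      = ∑ e, ∑ f, M.Γ x e a c * (M.Γ x f b d * T x e f) := by
    rw [sum_swap fun e f => M.Γ x e b d * (M.Γ x f a c * T x f e)]
    exact Finset.sum_congr rfl fun e _ => Finset.sum_congr rfl fun f _ => by ring
  rw [hsplit, hsplit, hsplit, hsplit, hcovc a b, hcovc b a, hcovd a b, hcovd b a, hRc, hRd]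
  linear_combination h1 - h2 + hs1 - hs2 + hs3 - hs4 + hx1 - hx2

lemma covD2_smul_g {f : (Fin n → ℝ) → ℝ} (hf : Sm f) (x : Fin n → ℝ) (c a b : Fin n) :
    M.covD2 (fun y p q => f y * M.g y p q) x c a b = pd c f x * M.g x a b := by
  have hc := M.compat x c a b
  unfold covD2 at hc ⊢
  rw [pd_mul hf (M.smooth_g a b),
    sum_factor (f x) (fun d => M.Γ x d c a) (fun d => M.g x d b),
    sum_factor (f x) (fun d => M.Γ x d c b) (fun d => M.g x a d)]
  linear_combination f x * hc

lemma covD2_swap {T : (Fin n → ℝ) → Fin n → Fin n → ℝ} (x : Fin n → ℝ) (c a b : Fin n) :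
    M.covD2 (fun y p q => T y q p) x c a b = M.covD2 T x c b a := by
  unfold covD2
  ring

lemma covD2_add {S T : (Fin n → ℝ) → Fin n → Fin n → ℝ}
    (hS : ∀ a b, Sm (fun x => S x a b)) (hT : ∀ a b, Sm (fun x => T x a b))
    (x : Fin n → ℝ) (c a b : Fin n) :
    M.covD2 (fun y p q => S y p q + T y p q) x c a b
      = M.covD2 S x c a b + M.covD2 T x c a b := by
  unfold covD2
  rw [pd_add (hS a b) (hT a b)]
  simp only [mul_add, Finset.sum_add_distrib]
  ring

/-- Leibniz: `∇_d (ω_a g_{bc}) = (∇_d ω_a) g_{bc}` (index `a` in slot 2). -/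
lemma covD3_P1 {ω : (Fin n → ℝ) → Fin n → ℝ} (hω : ∀ a, Sm (fun x => ω x a))
    (x : Fin n → ℝ) (d c a b : Fin n) :
    M.covD3 (fun y p q r => ω y q * M.g y r p) x d c a b
      = M.covD1 ω x d a * M.g x b c := by
  have hc := M.compat x d b c
  unfold covD2 at hc
  unfold covD3 covD1
  rw [pd_mul (hω a) (M.smooth_g b c),
    sum_factor (ω x a) (fun e => M.Γ x e d c) (fun e => M.g x b e),
    sum_factor' (M.g x b c) (fun e => M.Γ x e d a) (fun e => ω x e),
    sum_factor (ω x a) (fun e => M.Γ x e d b) (fun e => M.g x e c)]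
  linear_combination ω x a * hc

/-- Leibniz: index in slot 3. -/
lemma covD3_P2 {ω : (Fin n → ℝ) → Fin n → ℝ} (hω : ∀ a, Sm (fun x => ω x a))
    (x : Fin n → ℝ) (d c a b : Fin n) :
    M.covD3 (fun y p q r => ω y r * M.g y q p) x d c a b
      = M.covD1 ω x d b * M.g x a c := by
  have hc := M.compat x d a c
  unfold covD2 at hc
  unfold covD3 covD1
  rw [pd_mul (hω b) (M.smooth_g a c),
    sum_factor (ω x b) (fun e => M.Γ x e d c) (fun e => M.g x a e),
    sum_factor (ω x b) (fun e => M.Γ x e d a) (fun e => M.g x e c),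
    sum_factor' (M.g x a c) (fun e => M.Γ x e d b) (fun e => ω x e)]
  linear_combination ω x b * hc

/-- Leibniz: index in slot 1. -/
lemma covD3_P3 {ω : (Fin n → ℝ) → Fin n → ℝ} (hω : ∀ a, Sm (fun x => ω x a))
    (x : Fin n → ℝ) (d c a b : Fin n) :
    M.covD3 (fun y p q r => ω y p * M.g y q r) x d c a b
      = M.covD1 ω x d c * M.g x a b := by
  have hc := M.compat x d a b
  unfold covD2 at hc
  unfold covD3 covD1
  rw [pd_mul (hω c) (M.smooth_g a b),
    sum_factor' (M.g x a b) (fun e => M.Γ x e d c) (fun e => ω x e),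
    sum_factor (ω x c) (fun e => M.Γ x e d a) (fun e => M.g x e b),
    sum_factor (ω x c) (fun e => M.Γ x e d b) (fun e => M.g x a e)]
  linear_combination ω x c * hc

lemma covD3_add {S T : (Fin n → ℝ) → Fin n → Fin n → Fin n → ℝ}
    (hS : ∀ b c d, Sm (fun x => S x b c d)) (hT : ∀ b c d, Sm (fun x => T x b c d))
    (x : Fin n → ℝ) (a b c d : Fin n) :
    M.covD3 (fun y p q r => S y p q r + T y p q r) x a b c d
      = M.covD3 S x a b c d + M.covD3 T x a b c d := by
  unfold covD3
  rw [pd_add (hS b c d) (hT b c d)]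
  simp only [mul_add, Finset.sum_add_distrib]
  ring

lemma covD3_sub {S T : (Fin n → ℝ) → Fin n → Fin n → Fin n → ℝ}
    (hS : ∀ b c d, Sm (fun x => S x b c d)) (hT : ∀ b c d, Sm (fun x => T x b c d))
    (x : Fin n → ℝ) (a b c d : Fin n) :
    M.covD3 (fun y p q r => S y p q r - T y p q r) x a b c d
      = M.covD3 S x a b c d - M.covD3 T x a b c d := by
  unfold covD3
  rw [pd_sub (hS b c d) (hT b c d)]
  simp only [mul_sub, Finset.sum_sub_distrib]
  ring

lemma covD3_cmul {T : (Fin n → ℝ) → Fin n → Fin n → Fin n → ℝ}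
    (hT : ∀ b c d, Sm (fun x => T x b c d)) (μ : ℝ)
    (x : Fin n → ℝ) (a b c d : Fin n) :
    M.covD3 (fun y p q r => μ * T y p q r) x a b c d = μ * M.covD3 T x a b c d := by
  unfold covD3
  rw [pd_const_mul (hT b c d) μ,
    sum_factor μ (fun e => M.Γ x e a b) (fun e => T x e c d),
    sum_factor μ (fun e => M.Γ x e a c) (fun e => T x b e d),
    sum_factor μ (fun e => M.Γ x e a d) (fun e => T x b c e)]
  ring

lemma covD3_neg {T : (Fin n → ℝ) → Fin n → Fin n → Fin n → ℝ}
    (x : Fin n → ℝ) (a b c d : Fin n) :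
    M.covD3 (fun y p q r => -T y p q r) x a b c d = -M.covD3 T x a b c d := by
  unfold covD3
  rw [pd_neg]
  simp only [mul_neg, Finset.sum_neg_distrib]
  ring

lemma covD1_congr {k1 k2 : (Fin n → ℝ) → Fin n → ℝ} (h : ∀ y b, k1 y b = k2 y b)
    (x : Fin n → ℝ) (a b : Fin n) : M.covD1 k1 x a b = M.covD1 k2 x a b := by
  unfold covD1
  rw [pd_congr a x (fun y => h y b)]
  congr 1
  exact Finset.sum_congr rfl fun c _ => by rw [h x c]

lemma covD1_add_smul {f h : (Fin n → ℝ) → Fin n → ℝ}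
    (hf : ∀ b, Sm (fun x => f x b)) (hh : ∀ b, Sm (fun x => h x b)) (μ : ℝ)
    (x : Fin n → ℝ) (a b : Fin n) :
    M.covD1 (fun y q => f y q + μ * h y q) x a b
      = M.covD1 f x a b + μ * M.covD1 h x a b := by
  unfold covD1
  rw [pd_add (hf b) (Sm_cmul (hh b) μ), pd_const_mul (hh b) μ]
  simp only [mul_add, Finset.sum_add_distrib]
  rw [sum_factor μ (fun c => M.Γ x c a b) (fun c => h x c)]
  ring

/-- contraction lemmas -/
lemma conL1 (x : Fin n → ℝ) (K : ℝ) :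
    (∑ c, ∑ b, M.ginv x c b * (K * M.g x b c)) = K * n := by
  have h : ∀ c : Fin n, (∑ b, M.ginv x c b * (K * M.g x b c)) = K := by
    intro c
    rw [sum_factor K (fun b => M.ginv x c b) (fun b => M.g x b c), M.invl x c c]
    simp
  rw [Finset.sum_congr rfl fun c _ => h c]
  simp [mul_comm]

lemma conL2 (x : Fin n → ℝ) (K : ℝ) :
    (∑ c, ∑ b, M.ginv x c b * (K * M.g x c b)) = K * n := by
  rw [show (∑ c, ∑ b, M.ginv x c b * (K * M.g x c b))
      = ∑ c, ∑ b, M.ginv x c b * (K * M.g x b c) from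
    Finset.sum_congr rfl fun c _ => Finset.sum_congr rfl fun b _ => by rw [M.symm x c b]]
  exact M.conL1 x K

lemma conL3 (x : Fin n → ℝ) (q : Fin n) (F : Fin n → ℝ) :
    (∑ c, ∑ b, M.ginv x c b * (F b * M.g x q c)) = F q := by
  rw [Finset.sum_comm]
  have h : ∀ b : Fin n, (∑ c, M.ginv x c b * (F b * M.g x q c))
      = F b * (if b = q then (1:ℝ) else 0) := by
    intro b
    rw [sum_factor (F b) (fun c => M.ginv x c b) (fun c => M.g x q c)]
    congr 1
    rw [show (∑ c, M.ginv x c b * M.g x q c) = ∑ c, M.ginv x b c * M.g x c q from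
      Finset.sum_congr rfl fun c _ => by rw [M.ginv_symm x c b, M.symm x q c]]
    exact M.invl x b q
  rw [Finset.sum_congr rfl fun b _ => h b]
  simp only [mul_ite, mul_one, mul_zero, Finset.sum_ite_eq', Finset.mem_univ, if_true]

lemma conL4 (x : Fin n → ℝ) (q : Fin n) (F : Fin n → ℝ) :
    (∑ c, ∑ b, M.ginv x c b * (F b * M.g x c q)) = F q := by
  rw [show (∑ c, ∑ b, M.ginv x c b * (F b * M.g x c q))
      = ∑ c, ∑ b, M.ginv x c b * (F b * M.g x q c) from
    Finset.sum_congr rfl fun c _ => Finset.sum_congr rfl fun b _ => by rw [M.symm x c q]]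
  exact M.conL3 x q F

lemma conL5 (x : Fin n → ℝ) (q : Fin n) (F : Fin n → ℝ) :
    (∑ c, ∑ b, M.ginv x c b * (F c * M.g x q b)) = F q := by
  have h : ∀ c : Fin n, (∑ b, M.ginv x c b * (F c * M.g x q b))
      = F c * (if c = q then (1:ℝ) else 0) := by
    intro c
    rw [sum_factor (F c) (fun b => M.ginv x c b) (fun b => M.g x q b)]
    congr 1
    rw [show (∑ b, M.ginv x c b * M.g x q b) = ∑ b, M.ginv x c b * M.g x b q from
      Finset.sum_congr rfl fun b _ => by rw [M.symm x q b]]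
    exact M.invl x c q
  rw [Finset.sum_congr rfl fun c _ => h c]
  simp only [mul_ite, mul_one, mul_zero, Finset.sum_ite_eq', Finset.mem_univ, if_true]

lemma conL6 (x : Fin n → ℝ) (q : Fin n) (F : Fin n → ℝ) :
    (∑ c, ∑ b, M.ginv x c b * (F c * M.g x b q)) = F q := by
  rw [show (∑ c, ∑ b, M.ginv x c b * (F c * M.g x b q))
      = ∑ c, ∑ b, M.ginv x c b * (F c * M.g x q b) from
    Finset.sum_congr rfl fun c _ => Finset.sum_congr rfl fun b _ => by rw [M.symm x b q]]
  exact M.conL5 x q F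

lemma conL7 (x : Fin n → ℝ) (K : ℝ) (F : Fin n → Fin n → ℝ) :
    (∑ c, ∑ b, M.ginv x c b * (K * F c b)) = K * ∑ c, ∑ b, M.ginv x c b * F c b := by
  rw [Finset.mul_sum]
  refine Finset.sum_congr rfl fun c _ => ?_
  exact sum_factor K (fun b => M.ginv x c b) (fun b => F c b)

end PseudoMetricChart

/-- on a conformally flat Einstein manifold with `P = (J/n) g`,
`J ≠ 0` constant, for a conformal Killing 1-form `k` (with
`∇_{(a}k_{b)} = -ρ g_{ab}`, `ρ = -(1/n)∇_a k^a`) the Hessian of `ρ` satisfies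
`∇_a ∇_b ρ = -(2J/n) ρ g_{ab}`, and `k̄_b = k_b + (1/(2J)) ∇_b ∇_a k^a` is a
Killing vector field for `g`. -/
theorem einstein_ckv_killing {n : ℕ} (hn : 3 ≤ n) (M : PseudoMetricChart n)
    (J : ℝ) (hJ0 : J ≠ 0)
    (hJconst : ∀ x, M.Jsc x = J)
    (hEin : ∀ x a b, M.Schouten x a b = (J / (n : ℝ)) * M.g x a b)
    (hCF : ∀ x a b c d,
      (∑ e, M.g x c e * M.Riem x a b e d)
        = M.g x c a * M.Schouten x b d - M.g x c b * M.Schouten x a d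
          + M.g x d b * M.Schouten x a c - M.g x d a * M.Schouten x b c)
    (k : (Fin n → ℝ) → Fin n → ℝ)
    (hk_smooth : ∀ a, ContDiff ℝ (⊤ : ℕ∞) fun x => k x a)
    (kvec : (Fin n → ℝ) → Fin n → ℝ)
    (hkvec : ∀ x c, kvec x c = ∑ b, M.ginv x c b * k x b)
    (ρ : (Fin n → ℝ) → ℝ)
    (hρ : ∀ x, ρ x = -(1 / (n : ℝ)) * M.divVec kvec x)
    (hCKV : ∀ x a b,
      (1 / 2) * (M.covD1 k x a b + M.covD1 k x b a) = -(ρ x) * M.g x a b) :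
    (∀ x a b, M.covD1 (fun y c => pd c ρ y) x a b
        = -(2 * J / (n : ℝ)) * ρ x * M.g x a b)
      ∧ (∀ x a b,
          M.covD1 (fun y b' => k y b'
              + (1 / (2 * J)) * pd b' (fun z => M.divVec kvec z) y) x a b
            + M.covD1 (fun y b' => k y b'
              + (1 / (2 * J)) * pd b' (fun z => M.divVec kvec z) y) x b a = 0) := by
  classical
  open CalcAux PseudoMetricChart in
  have hn3 : (3:ℝ) ≤ (n:ℝ) := by exact_mod_cast hn
  have hnne : (n:ℝ) ≠ 0 := by linarith
  set lam : ℝ := 2 * J / (n:ℝ) with hlam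
  -- smoothness facts
  have hkv : ∀ b, CalcAux.Sm (fun x => kvec x b) := by
    intro b
    rw [show (fun x => kvec x b) = fun x => ∑ e, M.ginv x b e * k x e from
      funext fun x => hkvec x b]
    exact CalcAux.Sm_sum fun e => CalcAux.Sm_mul (M.smooth_ginv b e) (hk_smooth e)
  have hdivs : CalcAux.Sm (fun x => M.divVec kvec x) := by
    unfold PseudoMetricChart.divVec PseudoMetricChart.covDvec
    exact CalcAux.Sm_sum fun a => CalcAux.Sm_add (CalcAux.Sm_pd (hkv a) a)
      (CalcAux.Sm_sum fun c => CalcAux.Sm_mul (M.smΓ a a c) (hkv c))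
  have hρs : CalcAux.Sm ρ := by
    rw [show ρ = fun x => -(1/(n:ℝ)) * M.divVec kvec x from funext hρ]
    exact CalcAux.Sm_cmul hdivs _
  have hpdρ : ∀ b, CalcAux.Sm (fun x => pd b ρ x) := fun b => CalcAux.Sm_pd hρs b
  have hT : ∀ a b, CalcAux.Sm (fun x => M.covD1 k x a b) := fun a b => M.smCovD1 hk_smooth a b
  -- constant curvature form of the Riemann tensor
  have hRiem : ∀ (x : Fin n → ℝ) (a b e d : Fin n), M.Riem x a b e d
      = lam * ((if e = a then (1:ℝ) else 0) * M.g x b d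
          - (if e = b then (1:ℝ) else 0) * M.g x a d) := by
    intro x a b e d
    have hsolve : M.Riem x a b e d
        = ∑ c, M.ginv x e c * ∑ f, M.g x c f * M.Riem x a b f d := by
      symm
      calc (∑ c, M.ginv x e c * ∑ f, M.g x c f * M.Riem x a b f d)
          = ∑ c, ∑ f, M.ginv x e c * (M.g x c f * M.Riem x a b f d) :=
            Finset.sum_congr rfl fun c _ => Finset.mul_sum _ _ _
        _ = ∑ f, ∑ c, M.ginv x e c * (M.g x c f * M.Riem x a b f d) := Finset.sum_comm
        _ = ∑ f, (∑ c, M.ginv x e c * M.g x c f) * M.Riem x a b f d := by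
            refine Finset.sum_congr rfl fun f _ => ?_
            rw [Finset.sum_mul]
            exact Finset.sum_congr rfl fun c _ => by ring
        _ = ∑ f, (if e = f then (1:ℝ) else 0) * M.Riem x a b f d :=
            Finset.sum_congr rfl fun f _ => by rw [M.invl x e f]
        _ = M.Riem x a b e d := by
            simp only [ite_mul, one_mul, zero_mul, Finset.sum_ite_eq, Finset.mem_univ,
              if_true]
    have hinner : ∀ c, (∑ f, M.g x c f * M.Riem x a b f d)
        = (J/(n:ℝ)) * (M.g x c a * M.g x b d - M.g x c b * M.g x a d
            + M.g x d b * M.g x a c - M.g x d a * M.g x b c) := by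
      intro c
      rw [hCF x a b c d, hEin, hEin, hEin, hEin]
      ring
    have e1 : (∑ c, M.ginv x e c * (M.g x c a * M.g x b d))
        = (if e = a then (1:ℝ) else 0) * M.g x b d := by
      rw [sum_factor' (M.g x b d) (fun c => M.ginv x e c) (fun c => M.g x c a), M.invl x e a]
    have e2 : (∑ c, M.ginv x e c * (M.g x c b * M.g x a d))
        = (if e = b then (1:ℝ) else 0) * M.g x a d := by
      rw [sum_factor' (M.g x a d) (fun c => M.ginv x e c) (fun c => M.g x c b), M.invl x e b]
    have e3 : (∑ c, M.ginv x e c * (M.g x a c * M.g x d b))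
        = (if e = a then (1:ℝ) else 0) * M.g x d b := by
      rw [show (∑ c, M.ginv x e c * (M.g x a c * M.g x d b))
          = ∑ c, M.ginv x e c * (M.g x c a * M.g x d b) from
        Finset.sum_congr rfl fun c _ => by rw [M.symm x a c]]
      rw [sum_factor' (M.g x d b) (fun c => M.ginv x e c) (fun c => M.g x c a), M.invl x e a]
    have e4 : (∑ c, M.ginv x e c * (M.g x b c * M.g x d a))
        = (if e = b then (1:ℝ) else 0) * M.g x d a := by
      rw [show (∑ c, M.ginv x e c * (M.g x b c * M.g x d a))
          = ∑ c, M.ginv x e c * (M.g x c b * M.g x d a) from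
        Finset.sum_congr rfl fun c _ => by rw [M.symm x b c]]
      rw [sum_factor' (M.g x d a) (fun c => M.ginv x e c) (fun c => M.g x c b), M.invl x e b]
    have hsplit : (∑ c, M.ginv x e c * ∑ f, M.g x c f * M.Riem x a b f d)
        = (J/(n:ℝ)) * ((∑ c, M.ginv x e c * (M.g x c a * M.g x b d))
            - (∑ c, M.ginv x e c * (M.g x c b * M.g x a d))
            + (∑ c, M.ginv x e c * (M.g x a c * M.g x d b))
            - ∑ c, M.ginv x e c * (M.g x b c * M.g x d a)) := by
      rw [Finset.sum_congr rfl fun c _ => by rw [hinner c]]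
      rw [Finset.sum_congr rfl fun c (_ : c ∈ Finset.univ) =>
        show M.ginv x e c * ((J/(n:ℝ)) * (M.g x c a * M.g x b d - M.g x c b * M.g x a d
            + M.g x d b * M.g x a c - M.g x d a * M.g x b c))
          = (J/(n:ℝ)) * (M.ginv x e c * (M.g x c a * M.g x b d)
              - M.ginv x e c * (M.g x c b * M.g x a d)
              + M.ginv x e c * (M.g x a c * M.g x d b)
              - M.ginv x e c * (M.g x b c * M.g x d a)) from by ring]
      rw [← Finset.mul_sum]
      congr 1
      simp only [Finset.sum_sub_distrib, Finset.sum_add_distrib]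
    rw [hsolve, hsplit, e1, e2, e3, e4, M.symm x d b, M.symm x d a, hlam]
    ring
  -- antisymmetric part of ∇∇k  (Ricci identity + constant curvature)
  have hanti : ∀ (x : Fin n → ℝ) (a b c : Fin n),
      M.covD2 (fun y p q => M.covD1 k y p q) x a b c
        - M.covD2 (fun y p q => M.covD1 k y p q) x b a c
      = -lam * (k x a * M.g x b c - k x b * M.g x a c) := by
    intro x a b c
    rw [M.ricci1 hk_smooth x a b c]
    have : (∑ d, M.Riem x a b d c * k x d)
        = lam * (M.g x b c * k x a - M.g x a c * k x b) := by
      rw [Finset.sum_congr rfl fun d (_ : d ∈ Finset.univ) => by rw [hRiem x a b d c]]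
      rw [Finset.sum_congr rfl fun d (_ : d ∈ Finset.univ) =>
        show lam * ((if d = a then (1:ℝ) else 0) * M.g x b c
              - (if d = b then (1:ℝ) else 0) * M.g x a c) * k x d
          = lam * M.g x b c * ((if d = a then (1:ℝ) else 0) * k x d)
            - lam * M.g x a c * ((if d = b then (1:ℝ) else 0) * k x d) from by ring]
      rw [Finset.sum_sub_distrib, ← Finset.mul_sum, ← Finset.mul_sum]
      simp only [ite_mul, one_mul, zero_mul, Finset.sum_ite_eq, Finset.sum_ite_eq',
        Finset.mem_univ, if_true]
      ring
    rw [this]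
    ring
  -- symmetric part of ∇∇k (derivative of the conformal Killing equation)
  have hsym2 : ∀ (x : Fin n → ℝ) (c a b : Fin n),
      M.covD2 (fun y p q => M.covD1 k y p q) x c a b
        + M.covD2 (fun y p q => M.covD1 k y p q) x c b a
      = -2 * pd c ρ x * M.g x a b := by
    intro x c a b
    have hQ : (fun y (p q : Fin n) => M.covD1 k y p q
        + (M.covD1 k y q p + 2 * ρ y * M.g y p q)) = fun _ _ _ => (0:ℝ) := by
      funext y p q
      linear_combination 2 * hCKV y p q
    have hz : M.covD2 (fun y p q => M.covD1 k y p q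
        + (M.covD1 k y q p + 2 * ρ y * M.g y p q)) x c a b = 0 := by
      rw [hQ]
      unfold PseudoMetricChart.covD2
      rw [pd_const]
      simp
    rw [M.covD2_add hT (fun p q => CalcAux.Sm_add (hT q p)
        (CalcAux.Sm_mul (CalcAux.Sm_cmul hρs 2) (M.smooth_g p q))),
      M.covD2_add (fun p q => hT q p)
        (fun p q => CalcAux.Sm_mul (CalcAux.Sm_cmul hρs 2) (M.smooth_g p q)),
      M.covD2_swap (T := fun y p q => M.covD1 k y p q), M.covD2_smul_g (CalcAux.Sm_cmul hρs 2), pd_const_mul hρs 2] at hz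
    linear_combination hz
  -- full second covariant derivative of k
  have hU : ∀ (x : Fin n → ℝ) (c a b : Fin n),
      M.covD2 (fun y p q => M.covD1 k y p q) x c a b
      = -(pd a ρ x * M.g x b c) + pd b ρ x * M.g x a c - pd c ρ x * M.g x a b
        + lam * (k x a * M.g x b c) - lam * (k x b * M.g x a c) := by
    intro x c a b
    have s1 := hsym2 x c a b
    have s2 := hsym2 x a c b
    have s3 := hsym2 x b a c
    have a1 := hanti x c a b
    have a2 := hanti x a b c
    have a3 := hanti x b c a
    have g1 := M.symm x a b
    have g2 := M.symm x a c
    have g3 := M.symm x b c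
    linear_combination (1/2) * (s1 + a1 + s2 - a2 - s3 + a3)
      + (pd a ρ x - lam * k x a / 2) * g3 + (lam * k x b / 2) * g2
      + (-(lam * k x c) / 2) * g1
  -- third covariant derivative of k
  have sm1 : ∀ p q r : Fin n, CalcAux.Sm (fun x => pd q ρ x * M.g x r p) :=
    fun p q r => CalcAux.Sm_mul (hpdρ q) (M.smooth_g r p)
  have sm2 : ∀ p q r : Fin n, CalcAux.Sm (fun x => pd r ρ x * M.g x q p) :=
    fun p q r => CalcAux.Sm_mul (hpdρ r) (M.smooth_g q p)
  have sm3 : ∀ p q r : Fin n, CalcAux.Sm (fun x => pd p ρ x * M.g x q r) :=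
    fun p q r => CalcAux.Sm_mul (hpdρ p) (M.smooth_g q r)
  have sm4 : ∀ p q r : Fin n, CalcAux.Sm (fun x => k x q * M.g x r p) :=
    fun p q r => CalcAux.Sm_mul (hk_smooth q) (M.smooth_g r p)
  have sm5 : ∀ p q r : Fin n, CalcAux.Sm (fun x => k x r * M.g x q p) :=
    fun p q r => CalcAux.Sm_mul (hk_smooth r) (M.smooth_g q p)
  have hW : ∀ (x : Fin n → ℝ) (d c a b : Fin n),
      M.covD3 (fun y p q r => M.covD2 (fun z p' q' => M.covD1 k z p' q') y p q r) x d c a b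
      = -(M.covD1 (fun y q => pd q ρ y) x d a * M.g x b c)
        + M.covD1 (fun y q => pd q ρ y) x d b * M.g x a c
        - M.covD1 (fun y q => pd q ρ y) x d c * M.g x a b
        + lam * (M.covD1 k x d a * M.g x b c)
        - lam * (M.covD1 k x d b * M.g x a c) := by
    intro x d c a b
    rw [show (fun y p q r => M.covD2 (fun z p' q' => M.covD1 k z p' q') y p q r)
        = fun y p q r => ((((-(pd q ρ y * M.g y r p)) + pd r ρ y * M.g y q p)
            - pd p ρ y * M.g y q r) + lam * (k y q * M.g y r p)) - lam * (k y r * M.g y q p)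
      from funext fun y => funext fun p => funext fun q => funext fun r => by
        rw [hU y p q r]]
    rw [M.covD3_sub
        (S := fun y p q r => (((-(pd q ρ y * M.g y r p)) + pd r ρ y * M.g y q p)
            - pd p ρ y * M.g y q r) + lam * (k y q * M.g y r p))
        (T := fun y p q r => lam * (k y r * M.g y q p))
        (fun p q r => CalcAux.Sm_add (CalcAux.Sm_sub (CalcAux.Sm_add
          (CalcAux.Sm_neg (sm1 p q r)) (sm2 p q r)) (sm3 p q r))
          (CalcAux.Sm_cmul (sm4 p q r) lam))
        (fun p q r => CalcAux.Sm_cmul (sm5 p q r) lam)]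
    rw [M.covD3_add
        (S := fun y p q r => ((-(pd q ρ y * M.g y r p)) + pd r ρ y * M.g y q p)
            - pd p ρ y * M.g y q r)
        (T := fun y p q r => lam * (k y q * M.g y r p))
        (fun p q r => CalcAux.Sm_sub (CalcAux.Sm_add
          (CalcAux.Sm_neg (sm1 p q r)) (sm2 p q r)) (sm3 p q r))
        (fun p q r => CalcAux.Sm_cmul (sm4 p q r) lam)]
    rw [M.covD3_sub
        (S := fun y p q r => (-(pd q ρ y * M.g y r p)) + pd r ρ y * M.g y q p)
        (T := fun y p q r => pd p ρ y * M.g y q r)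
        (fun p q r => CalcAux.Sm_add (CalcAux.Sm_neg (sm1 p q r)) (sm2 p q r))
        sm3]
    rw [M.covD3_add
        (S := fun y p q r => -(pd q ρ y * M.g y r p))
        (T := fun y p q r => pd r ρ y * M.g y q p)
        (fun p q r => CalcAux.Sm_neg (sm1 p q r)) sm2]
    rw [M.covD3_neg (T := fun y p q r => pd q ρ y * M.g y r p)]
    rw [M.covD3_cmul (T := fun y p q r => k y q * M.g y r p) sm4 lam]
    rw [M.covD3_cmul (T := fun y p q r => k y r * M.g y q p) sm5 lam]
    rw [M.covD3_P1 (ω := fun y q => pd q ρ y) hpdρ x d c a b,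
      M.covD3_P2 (ω := fun y r => pd r ρ y) hpdρ x d c a b,
      M.covD3_P3 (ω := fun y p => pd p ρ y) hpdρ x d c a b,
      M.covD3_P1 (ω := k) hk_smooth x d c a b,
      M.covD3_P2 (ω := k) hk_smooth x d c a b]
  -- contracted Riemann sums
  have hsum1 : ∀ (x : Fin n → ℝ) (d c a b : Fin n),
      (∑ e, M.Riem x d c e a * M.covD1 k x e b)
        = lam * (M.g x c a * M.covD1 k x d b - M.g x d a * M.covD1 k x c b) := by
    intro x d c a b
    rw [Finset.sum_congr rfl fun e (_ : e ∈ Finset.univ) => by rw [hRiem x d c e a]]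
    rw [Finset.sum_congr rfl fun e (_ : e ∈ Finset.univ) =>
      show lam * ((if e = d then (1:ℝ) else 0) * M.g x c a
            - (if e = c then (1:ℝ) else 0) * M.g x d a) * M.covD1 k x e b
        = lam * M.g x c a * ((if e = d then (1:ℝ) else 0) * M.covD1 k x e b)
          - lam * M.g x d a * ((if e = c then (1:ℝ) else 0) * M.covD1 k x e b) from by ring]
    rw [Finset.sum_sub_distrib, ← Finset.mul_sum, ← Finset.mul_sum]
    simp only [ite_mul, one_mul, zero_mul, Finset.sum_ite_eq, Finset.sum_ite_eq',
      Finset.mem_univ, if_true]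
    ring
  have hsum2 : ∀ (x : Fin n → ℝ) (d c a b : Fin n),
      (∑ e, M.Riem x d c e b * M.covD1 k x a e)
        = lam * (M.g x c b * M.covD1 k x a d - M.g x d b * M.covD1 k x a c) := by
    intro x d c a b
    rw [Finset.sum_congr rfl fun e (_ : e ∈ Finset.univ) => by rw [hRiem x d c e b]]
    rw [Finset.sum_congr rfl fun e (_ : e ∈ Finset.univ) =>
      show lam * ((if e = d then (1:ℝ) else 0) * M.g x c b
            - (if e = c then (1:ℝ) else 0) * M.g x d b) * M.covD1 k x a e
        = lam * M.g x c b * ((if e = d then (1:ℝ) else 0) * M.covD1 k x a e)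
          - lam * M.g x d b * ((if e = c then (1:ℝ) else 0) * M.covD1 k x a e) from by ring]
    rw [Finset.sum_sub_distrib, ← Finset.mul_sum, ← Finset.mul_sum]
    simp only [ite_mul, one_mul, zero_mul, Finset.sum_ite_eq, Finset.sum_ite_eq',
      Finset.mem_univ, if_true]
    ring
  -- symmetry of the Hessian of ρ
  have hHsym : ∀ (x : Fin n → ℝ) (p q : Fin n),
      M.covD1 (fun y e => pd e ρ y) x p q = M.covD1 (fun y e => pd e ρ y) x q p := by
    intro x p q
    unfold PseudoMetricChart.covD1
    rw [show pd p (fun y => pd q ρ y) x = pd q (fun y => pd p ρ y) x from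
      pd_comm hρs p q x]
    congr 1
    exact Finset.sum_congr rfl fun e _ => by rw [M.Γ_symm x e p q]
  -- the commutator identity E2
  have hE2 : ∀ (x : Fin n → ℝ) (d c a b : Fin n),
      (-((M.covD1 (fun y e => pd e ρ y) x d a) * M.g x b c) + (M.covD1 (fun y e => pd e ρ y) x d b) * M.g x a c - (M.covD1 (fun y e => pd e ρ y) x d c) * M.g x a b + lam * ((M.covD1 k x d a) * M.g x b c) - lam * ((M.covD1 k x d b) * M.g x a c)) - (-((M.covD1 (fun y e => pd e ρ y) x c a) * M.g x b d) + (M.covD1 (fun y e => pd e ρ y) x c b) * M.g x a d - (M.covD1 (fun y e => pd e ρ y) x c d) * M.g x a b + lam * ((M.covD1 k x c a) * M.g x b d) - lam * ((M.covD1 k x c b) * M.g x a d))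
        = (-(lam * (M.g x c a * (M.covD1 k x d b) - M.g x d a * (M.covD1 k x c b))) - lam * (M.g x c b * (M.covD1 k x a d) - M.g x d b * (M.covD1 k x a c))) := by
    intro x d c a b
    have r := M.ricci2 hT x d c a b
    rw [hW x d c a b, hW x c d a b, hsum1 x d c a b, hsum2 x d c a b] at r
    exact r
  -- contract E2 over (b,c) with the inverse metric
  have hE3 : ∀ (x : Fin n → ℝ) (d a : Fin n),
      ((2:ℝ) - (n:ℝ)) * M.covD1 (fun y e => pd e ρ y) x d a
          - M.g x a d * (∑ c, ∑ b, M.ginv x c b * (M.covD1 (fun y e => pd e ρ y) x c b))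
        = 2 * lam * ((n:ℝ) - 1) * ρ x * M.g x d a := by
    intro x d a
    have hsummed : (∑ c, ∑ b, M.ginv x c b * ((-((M.covD1 (fun y e => pd e ρ y) x d a) * M.g x b c) + (M.covD1 (fun y e => pd e ρ y) x d b) * M.g x a c - (M.covD1 (fun y e => pd e ρ y) x d c) * M.g x a b + lam * ((M.covD1 k x d a) * M.g x b c) - lam * ((M.covD1 k x d b) * M.g x a c)) - (-((M.covD1 (fun y e => pd e ρ y) x c a) * M.g x b d) + (M.covD1 (fun y e => pd e ρ y) x c b) * M.g x a d - (M.covD1 (fun y e => pd e ρ y) x c d) * M.g x a b + lam * ((M.covD1 k x c a) * M.g x b d) - lam * ((M.covD1 k x c b) * M.g x a d))))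
        = ∑ c, ∑ b, M.ginv x c b * ((-(lam * (M.g x c a * (M.covD1 k x d b) - M.g x d a * (M.covD1 k x c b))) - lam * (M.g x c b * (M.covD1 k x a d) - M.g x d b * (M.covD1 k x a c)))) :=
      Finset.sum_congr rfl fun c _ => Finset.sum_congr rfl fun b _ => by
        rw [hE2 x d c a b]
    have hL : (∑ c, ∑ b, M.ginv x c b * ((-((M.covD1 (fun y e => pd e ρ y) x d a) * M.g x b c) + (M.covD1 (fun y e => pd e ρ y) x d b) * M.g x a c - (M.covD1 (fun y e => pd e ρ y) x d c) * M.g x a b + lam * ((M.covD1 k x d a) * M.g x b c) - lam * ((M.covD1 k x d b) * M.g x a c)) - (-((M.covD1 (fun y e => pd e ρ y) x c a) * M.g x b d) + (M.covD1 (fun y e => pd e ρ y) x c b) * M.g x a d - (M.covD1 (fun y e => pd e ρ y) x c d) * M.g x a b + lam * ((M.covD1 k x c a) * M.g x b d) - lam * ((M.covD1 k x c b) * M.g x a d))))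
        = -((M.covD1 (fun y e => pd e ρ y) x d a) * (n:ℝ)) + (M.covD1 (fun y e => pd e ρ y) x d a) - (M.covD1 (fun y e => pd e ρ y) x d a) + (lam * (M.covD1 k x d a)) * (n:ℝ) - lam * (M.covD1 k x d a) + (M.covD1 (fun y e => pd e ρ y) x d a) - M.g x a d * (∑ c, ∑ b, M.ginv x c b * (M.covD1 (fun y e => pd e ρ y) x c b)) + (M.covD1 (fun y e => pd e ρ y) x a d) - lam * (M.covD1 k x d a) + (lam * M.g x a d) * (∑ c, ∑ b, M.ginv x c b * (M.covD1 k x c b)) := by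
      rw [Finset.sum_congr rfl fun c (_ : c ∈ Finset.univ) =>
        Finset.sum_congr rfl fun b (_ : b ∈ Finset.univ) =>
          show M.ginv x c b * ((-((M.covD1 (fun y e => pd e ρ y) x d a) * M.g x b c) + (M.covD1 (fun y e => pd e ρ y) x d b) * M.g x a c - (M.covD1 (fun y e => pd e ρ y) x d c) * M.g x a b + lam * ((M.covD1 k x d a) * M.g x b c) - lam * ((M.covD1 k x d b) * M.g x a c)) - (-((M.covD1 (fun y e => pd e ρ y) x c a) * M.g x b d) + (M.covD1 (fun y e => pd e ρ y) x c b) * M.g x a d - (M.covD1 (fun y e => pd e ρ y) x c d) * M.g x a b + lam * ((M.covD1 k x c a) * M.g x b d) - lam * ((M.covD1 k x c b) * M.g x a d)))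
            = -(M.ginv x c b * ((M.covD1 (fun y e => pd e ρ y) x d a) * M.g x b c)) + M.ginv x c b * ((M.covD1 (fun y e => pd e ρ y) x d b) * M.g x a c) - M.ginv x c b * ((M.covD1 (fun y e => pd e ρ y) x d c) * M.g x a b) + M.ginv x c b * ((lam * (M.covD1 k x d a)) * M.g x b c) - M.ginv x c b * ((lam * (M.covD1 k x d b)) * M.g x a c) + M.ginv x c b * ((M.covD1 (fun y e => pd e ρ y) x c a) * M.g x b d) - M.ginv x c b * (M.g x a d * (M.covD1 (fun y e => pd e ρ y) x c b)) + M.ginv x c b * ((M.covD1 (fun y e => pd e ρ y) x c d) * M.g x a b) - M.ginv x c b * ((lam * (M.covD1 k x c a)) * M.g x b d) + M.ginv x c b * ((lam * M.g x a d) * (M.covD1 k x c b)) from by ring]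
      simp only [Finset.sum_add_distrib, Finset.sum_sub_distrib, Finset.sum_neg_distrib]
      rw [M.conL1 x (M.covD1 (fun y e => pd e ρ y) x d a),
        M.conL3 x a (fun b => M.covD1 (fun y e => pd e ρ y) x d b),
        M.conL5 x a (fun c => M.covD1 (fun y e => pd e ρ y) x d c),
        M.conL1 x (lam * M.covD1 k x d a),
        M.conL3 x a (fun b => lam * M.covD1 k x d b),
        M.conL6 x d (fun c => M.covD1 (fun y e => pd e ρ y) x c a),
        M.conL7 x (M.g x a d) (fun c b => M.covD1 (fun y e => pd e ρ y) x c b),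
        M.conL5 x a (fun c => M.covD1 (fun y e => pd e ρ y) x c d),
        M.conL6 x d (fun c => lam * M.covD1 k x c a),
        M.conL7 x (lam * M.g x a d) (fun c b => M.covD1 k x c b)]
    have hR : (∑ c, ∑ b, M.ginv x c b * ((-(lam * (M.g x c a * (M.covD1 k x d b) - M.g x d a * (M.covD1 k x c b))) - lam * (M.g x c b * (M.covD1 k x a d) - M.g x d b * (M.covD1 k x a c)))))
        = -(lam * (M.covD1 k x d a)) + (lam * M.g x d a) * (∑ c, ∑ b, M.ginv x c b * (M.covD1 k x c b)) - (lam * (M.covD1 k x a d)) * (n:ℝ) + lam * (M.covD1 k x a d) := by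
      rw [Finset.sum_congr rfl fun c (_ : c ∈ Finset.univ) =>
        Finset.sum_congr rfl fun b (_ : b ∈ Finset.univ) =>
          show M.ginv x c b * ((-(lam * (M.g x c a * (M.covD1 k x d b) - M.g x d a * (M.covD1 k x c b))) - lam * (M.g x c b * (M.covD1 k x a d) - M.g x d b * (M.covD1 k x a c))))
            = -(M.ginv x c b * ((lam * (M.covD1 k x d b)) * M.g x c a)) + M.ginv x c b * ((lam * M.g x d a) * (M.covD1 k x c b)) - M.ginv x c b * ((lam * (M.covD1 k x a d)) * M.g x c b) + M.ginv x c b * ((lam * (M.covD1 k x a c)) * M.g x d b) from by ring]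
      simp only [Finset.sum_add_distrib, Finset.sum_sub_distrib, Finset.sum_neg_distrib]
      rw [M.conL4 x a (fun b => lam * M.covD1 k x d b),
        M.conL7 x (lam * M.g x d a) (fun c b => M.covD1 k x c b),
        M.conL2 x (lam * M.covD1 k x a d),
        M.conL5 x d (fun c => lam * M.covD1 k x a c)]
    have hmain := (hL.symm.trans hsummed).trans hR
    have hck := hCKV x d a
    have hgs := M.symm x d a
    have hh := hHsym x a d
    linear_combination hmain + (-2) * lam * ((n:ℝ) - 1) * hck + lam * (∑ c, ∑ b, M.ginv x c b * (M.covD1 k x c b)) * hgs - hh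
  -- the trace of the Hessian of ρ
  have h22n : ∀ x : Fin n → ℝ, ((2:ℝ) - 2*(n:ℝ)) ≠ 0 := fun _ => by linarith
  have htrH : ∀ x : Fin n → ℝ, (∑ c, ∑ b, M.ginv x c b * (M.covD1 (fun y e => pd e ρ y) x c b)) = -lam * (n:ℝ) * ρ x := by
    intro x
    have hsummed2 : (∑ d, ∑ a, M.ginv x d a * (((2:ℝ) - (n:ℝ)) * (M.covD1 (fun y e => pd e ρ y) x d a)
          - M.g x a d * (∑ c, ∑ b, M.ginv x c b * (M.covD1 (fun y e => pd e ρ y) x c b))))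
        = ∑ d, ∑ a, M.ginv x d a * (2 * lam * ((n:ℝ) - 1) * ρ x * M.g x d a) :=
      Finset.sum_congr rfl fun d _ => Finset.sum_congr rfl fun a _ => by
        rw [hE3 x d a]
    have hL2 : (∑ d, ∑ a, M.ginv x d a * (((2:ℝ) - (n:ℝ)) * (M.covD1 (fun y e => pd e ρ y) x d a)
          - M.g x a d * (∑ c, ∑ b, M.ginv x c b * (M.covD1 (fun y e => pd e ρ y) x c b))))
        = ((2:ℝ) - (n:ℝ)) * (∑ c, ∑ b, M.ginv x c b * (M.covD1 (fun y e => pd e ρ y) x c b)) - (∑ c, ∑ b, M.ginv x c b * (M.covD1 (fun y e => pd e ρ y) x c b)) * (n:ℝ) := by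
      rw [Finset.sum_congr rfl fun d (_ : d ∈ Finset.univ) =>
        Finset.sum_congr rfl fun a (_ : a ∈ Finset.univ) =>
          show M.ginv x d a * (((2:ℝ) - (n:ℝ)) * (M.covD1 (fun y e => pd e ρ y) x d a)
              - M.g x a d * (∑ c, ∑ b, M.ginv x c b * (M.covD1 (fun y e => pd e ρ y) x c b)))
            = M.ginv x d a * (((2:ℝ) - (n:ℝ)) * (M.covD1 (fun y e => pd e ρ y) x d a))
              - M.ginv x d a * ((∑ c, ∑ b, M.ginv x c b * (M.covD1 (fun y e => pd e ρ y) x c b)) * M.g x a d) from by ring]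
      simp only [Finset.sum_sub_distrib]
      rw [M.conL7 x ((2:ℝ) - (n:ℝ)) (fun d a => M.covD1 (fun y e => pd e ρ y) x d a),
        M.conL1 x (∑ c, ∑ b, M.ginv x c b * (M.covD1 (fun y e => pd e ρ y) x c b))]
    have hR2 : (∑ d, ∑ a, M.ginv x d a * (2 * lam * ((n:ℝ) - 1) * ρ x * M.g x d a))
        = (2 * lam * ((n:ℝ) - 1) * ρ x) * (n:ℝ) := by
      rw [Finset.sum_congr rfl fun d (_ : d ∈ Finset.univ) =>
        Finset.sum_congr rfl fun a (_ : a ∈ Finset.univ) =>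
          show M.ginv x d a * (2 * lam * ((n:ℝ) - 1) * ρ x * M.g x d a)
            = M.ginv x d a * ((2 * lam * ((n:ℝ) - 1) * ρ x) * M.g x d a) from by ring]
      rw [M.conL2 x (2 * lam * ((n:ℝ) - 1) * ρ x)]
    have E := (hL2.symm.trans hsummed2).trans hR2
    refine mul_left_cancel₀ (h22n x) ?_
    linear_combination E
  -- Part 1: the Hessian of ρ
  have hHval : ∀ (x : Fin n → ℝ) (a b : Fin n),
      M.covD1 (fun y e => pd e ρ y) x a b = -(2 * J / (n:ℝ)) * ρ x * M.g x a b := by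
    intro x a b
    have e := hE3 x a b
    rw [htrH x] at e
    have h2n : ((2:ℝ) - (n:ℝ)) ≠ 0 := by linarith
    refine mul_left_cancel₀ h2n ?_
    linear_combination e + lam * (n:ℝ) * ρ x * (M.symm x a b)
  refine ⟨fun x a b => hHval x a b, ?_⟩
  -- Part 2: the Killing equation for the corrected field
  intro x a b
  have hdiv_eq : ∀ (b' : Fin n) (y : Fin n → ℝ),
      pd b' (fun z => M.divVec kvec z) y = -(n:ℝ) * pd b' ρ y := by
    intro b' y
    rw [pd_congr b' y (fun z => show M.divVec kvec z = -(n:ℝ) * ρ z from by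
      rw [hρ z]; field_simp)]
    rw [pd_const_mul hρs (-(n:ℝ))]
  have hbar : ∀ (y : Fin n → ℝ) (q : Fin n),
      k y q + (1 / (2 * J)) * pd q (fun z => M.divVec kvec z) y
        = k y q + (-(n:ℝ) / (2 * J)) * pd q ρ y := by
    intro y q
    rw [hdiv_eq q y]
    ring
  rw [M.covD1_congr hbar x a b, M.covD1_congr hbar x b a,
    M.covD1_add_smul hk_smooth hpdρ (-(n:ℝ) / (2 * J)) x a b,
    M.covD1_add_smul hk_smooth hpdρ (-(n:ℝ) / (2 * J)) x b a,
    hHval x a b, hHval x b a, M.symm x b a]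
  have hck := hCKV x a b
  field_simp
  linear_combination 2 * hck
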